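/- Let V be a 2-vector space with source s, target t. Suppose ker(s) and V₀ carry Lie algebra structures, ∂ := t|_{ker s} : ker(s) → V₀ is a Lie algebra homomorphism, and D : V₀ → Der(ker s) is a Lie algebra homomorphism making (∂, D) a crossed module. Then the bracket [(x₁,y₁),(x₂,y₂)] = ([x₁,x₂] + D(y₁)x₂ − D(y₂)x₁, [y₁,y₂]) on V₁ ≅ ker(s) ⊕ V₀ makes V a category internal to Lie algebras: s, t, the unit, and the composition are all Lie algebra homomorphisms. -/

import Mathlib

attribute [local instance 100] LieRing.ofAssociativeRing


section Aux

variable {V₁ V₀ : Type*} [AddCommGroup V₁] [Module ℝ V₁]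
    [LieRing V₀] [LieAlgebra ℝ V₀]
    (s t : V₁ →ₗ[ℝ] V₀)
    [LieRing ↥(LinearMap.ker s)] [LieAlgebra ℝ ↥(LinearMap.ker s)]
    (del : ↥(LinearMap.ker s) →ₗ⁅ℝ⁆ V₀)
    (D : V₀ →ₗ⁅ℝ⁆ Module.End ℝ ↥(LinearMap.ker s))

private lemma auxF1 (hdel : ∀ x : LinearMap.ker s, del x = t (x : V₁))
    (a b : LinearMap.ker s) : del (a + b) = del a + del b := by
  rw [hdel, hdel, hdel, Submodule.coe_add, map_add]

private lemma aux_tgt' (hdel : ∀ x : LinearMap.ker s, del x = t (x : V₁))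
    (hcm1 : ∀ (y : V₀) (x : LinearMap.ker s), del (D y x) = ⁅y, del x⁆)
    (x₁ x₂ : LinearMap.ker s) (y₁ y₂ : V₀) :
    del (⁅x₁, x₂⁆ + D y₁ x₂ - D y₂ x₁) + ⁅y₁, y₂⁆ = ⁅del x₁ + y₁, del x₂ + y₂⁆ := by
  have F : del (⁅x₁, x₂⁆ + D y₁ x₂ - D y₂ x₁)
      = del ⁅x₁, x₂⁆ + del (D y₁ x₂) - del (D y₂ x₁) := by
    simp only [hdel, AddSubgroupClass.coe_sub, Submodule.coe_add, map_add, map_sub]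
  rw [F, LieHom.map_lie, hcm1, hcm1, add_lie, lie_add, lie_add, ← lie_skew y₂ (del x₁)]
  abel

private lemma aux_un' (hcm2 : ∀ x x' : LinearMap.ker s, D (del x) x' = ⁅x, x'⁆)
    (y y' : V₀) :
    (0 : LinearMap.ker s) = ⁅(0 : LinearMap.ker s), (0 : LinearMap.ker s)⁆ + D y 0 - D y' 0 := by
  rw [← hcm2, map_zero, map_zero, map_zero, add_zero, sub_zero]

private lemma aux_zero (hcm2 : ∀ x x' : LinearMap.ker s, D (del x) x' = ⁅x, x'⁆) :
    (0 : LinearMap.ker s) = ⁅(0 : LinearMap.ker s), (0 : LinearMap.ker s)⁆ := by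
  rw [← hcm2, map_zero]

private lemma aux_skew (hdel : ∀ x : LinearMap.ker s, del x = t (x : V₁))
    (hcm2 : ∀ x x' : LinearMap.ker s, D (del x) x' = ⁅x, x'⁆)
    (a b : LinearMap.ker s) : ⁅a, b⁆ + ⁅b, a⁆ = 0 := by
  have hz : (0 : LinearMap.ker s) = ⁅(0 : LinearMap.ker s), (0 : LinearMap.ker s)⁆ :=
    aux_zero s del D hcm2
  have hz0 := hz.trans (lie_self (0 : LinearMap.ker s))
  have h := hcm2 (a + b) (a + b)
  rw [lie_self, auxF1 s t del hdel, map_add D, LinearMap.add_apply, map_add, map_add,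
    hcm2, hcm2, hcm2, hcm2, lie_self, lie_self, ← hz0, zero_add, add_zero] at h
  exact h

private lemma aux_comp' (hdel : ∀ x : LinearMap.ker s, del x = t (x : V₁))
    (hcm2 : ∀ x x' : LinearMap.ker s, D (del x) x' = ⁅x, x'⁆)
    (p₁ q₁ p₁' q₁' : LinearMap.ker s) (q₂ q₂' : V₀) :
    ⁅p₁, p₁'⁆ + D (del q₁ + q₂) p₁' - D (del q₁' + q₂') p₁ + (⁅q₁, q₁'⁆ + D q₂ q₁' - D q₂' q₁)
      = ⁅p₁ + q₁, p₁' + q₁'⁆ + D q₂ (p₁' + q₁') - D q₂' (p₁ + q₁) := by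
  rw [map_add D, map_add D, LinearMap.add_apply, LinearMap.add_apply,
    hcm2 q₁ p₁', hcm2 q₁' p₁, ← hcm2 (p₁ + q₁) (p₁' + q₁'), auxF1 s t del hdel,
    map_add D, LinearMap.add_apply, map_add (D (del p₁)) p₁' q₁',
    map_add (D (del q₁)) p₁' q₁', map_add (D q₂) p₁' q₁', map_add (D q₂') p₁ q₁,
    hcm2 p₁ p₁', hcm2 p₁ q₁', hcm2 q₁ p₁', hcm2 q₁ q₁']
  have hs := congrArg (Subtype.val) (aux_skew s t del D hdel hcm2 p₁ q₁')
  simp only [Submodule.coe_add, ZeroMemClass.coe_zero] at hs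
  apply Subtype.ext
  simp only [Submodule.coe_add, AddSubgroupClass.coe_sub]
  rw [eq_neg_of_add_eq_zero_right hs]
  abel

end Aux

/-- Let `V = {V₁ ⇉ V₀}` be a 2-vector space with source `s`, target `t`, unit `e`.
    Suppose `ker s` and `V₀` carry Lie algebra structures, `∂ := t|_{ker s}` is a Lie
    algebra homomorphism, and `D : V₀ → Der(ker s)` is a Lie algebra homomorphism
    (valued in derivations) making `(∂, D)` a crossed module. Then, under the
    identification `V₁ ≅ ker s ⊕ V₀`, the crossed-module bracket makes `V` a category
    internal to Lie algebras: source, target, unit and composition are Lie algebra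
    homomorphisms. -/
theorem stmt_17 {V₁ V₀ : Type*} [AddCommGroup V₁] [Module ℝ V₁]
    [LieRing V₀] [LieAlgebra ℝ V₀]
    (s t : V₁ →ₗ[ℝ] V₀) (e : V₀ →ₗ[ℝ] V₁)
    (hse : ∀ v, s (e v) = v) (hte : ∀ v, t (e v) = v)
    [LieRing ↥(LinearMap.ker s)] [LieAlgebra ℝ ↥(LinearMap.ker s)]
    (del : ↥(LinearMap.ker s) →ₗ⁅ℝ⁆ V₀)
    (hdel : ∀ x : LinearMap.ker s, del x = t (x : V₁))
    (D : V₀ →ₗ⁅ℝ⁆ Module.End ℝ ↥(LinearMap.ker s))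
    (hder : ∀ (y : V₀) (a b : LinearMap.ker s),
      D y ⁅a, b⁆ = ⁅D y a, b⁆ + ⁅a, D y b⁆)
    (hcm1 : ∀ (y : V₀) (x : LinearMap.ker s), del (D y x) = ⁅y, del x⁆)
    (hcm2 : ∀ x x' : LinearMap.ker s, D (del x) x' = ⁅x, x'⁆) :
    let K := ↥(LinearMap.ker s)
    let br : K × V₀ → K × V₀ → K × V₀ := fun p q =>
      (⁅p.1, q.1⁆ + D p.2 q.1 - D q.2 p.1, ⁅p.2, q.2⁆)
    let src : K × V₀ → V₀ := fun p => p.2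
    let tgt : K × V₀ → V₀ := fun p => del p.1 + p.2
    let un : V₀ → K × V₀ := fun y => (0, y)
    let comp : K × V₀ → K × V₀ → K × V₀ := fun p q => (p.1 + q.1, q.2)
    -- source, target and unit are Lie algebra homomorphisms
    (∀ p q : K × V₀, src (br p q) = ⁅src p, src q⁆) ∧
    (∀ p q : K × V₀, tgt (br p q) = ⁅tgt p, tgt q⁆) ∧
    (∀ y y' : V₀, un ⁅y, y'⁆ = br (un y) (un y')) ∧
    -- composition is a Lie algebra homomorphism on composable pairs
    (∀ p q p' q' : K × V₀, src p = tgt q → src p' = tgt q' →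
      src (br p p') = tgt (br q q') ∧
      comp (br p p') (br q q') = br (comp p q) (comp p' q')) := by
  intro K br src tgt un comp
  have htgt : ∀ p q : K × V₀, tgt (br p q) = ⁅tgt p, tgt q⁆ :=
    fun p q => aux_tgt' s t del D hdel hcm1 p.1 q.1 p.2 q.2
  refine ⟨fun p q => rfl, htgt,
    fun y y' => Prod.ext (aux_un' s del D hcm2 y y') rfl, ?_⟩
  intro p q p' q' hp hp'
  refine ⟨?_, ?_⟩
  · show ⁅p.2, p'.2⁆ = tgt (br q q')
    rw [htgt q q']
    simp only [src, tgt] at hp hp'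
    rw [hp, hp']
  · simp only [src, tgt] at hp hp'
    refine Prod.ext ?_ rfl
    unfold br comp
    dsimp only
    rw [hp, hp']
    exact aux_comp' s t del D hdel hcm2 p.1 q.1 p'.1 q'.1 q.2 q'.2
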